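/- Let θ be a connected skew diagram and let t be its unique box on the highest diagonal (the box maximizing j−i). Then every box a ∈ θ with a ≠ t has an adjacent box in θ lying on a strictly higher diagonal; consequently, every box of θ is connected to t by a path of adjacent boxes with strictly increasing diagonal values. -/

import Mathlib

/-- A cell (box) of the plane: `(row, column)`. -/
abbrev Cell : Type := ℤ × ℤ

/-- The diagonal value `j − i` of a cell `(i, j)`. -/
def diagVal (c : Cell) : ℤ := c.2 - c.1

/-- Two cells are adjacent if they differ by 1 in exactly one coordinate. -/
def CellAdj (a b : Cell) : Prop :=
  (a.1 = b.1 ∧ (a.2 = b.2 + 1 ∨ b.2 = a.2 + 1)) ∨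
  (a.2 = b.2 ∧ (a.1 = b.1 + 1 ∨ b.1 = a.1 + 1))

/-- A finite set of cells is a skew diagram iff it is order-convex for the
componentwise order. -/
def IsSkewDiagram (S : Finset Cell) : Prop :=
  ∀ a b c : Cell, a ∈ S → b ∈ S → a ≤ c → c ≤ b → c ∈ S

/-- A skew diagram is connected iff no NW-SE anti-diagonal line partitions it into
two nonempty parts, one strictly northeast and one strictly southwest of the line. -/
def SkewConnected (S : Finset Cell) : Prop :=
  ¬ ∃ d : ℤ, (∀ c ∈ S, diagVal c ≠ d) ∧ (∃ c ∈ S, diagVal c < d) ∧ (∃ c ∈ S, d < diagVal c)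

lemma diag_lt_of_ne (S : Finset Cell) (hS : IsSkewDiagram S)
    (t : Cell) (htS : t ∈ S) (htmax : ∀ c ∈ S, diagVal c ≤ diagVal t)
    (a : Cell) (haS : a ∈ S) (hat : a ≠ t) : diagVal a < diagVal t := by
  rcases lt_or_eq_of_le (htmax a haS) with h | h
  · exact h
  exfalso
  obtain ⟨i, j⟩ := a
  obtain ⟨p, q⟩ := t
  simp only [diagVal] at h htmax
  rcases lt_trichotomy i p with hip | hip | hip
  · have hc : (i, q) ∈ S := hS (i, j) (p, q) (i, q) haS htS
      (by constructor <;> simp <;> omega) (by constructor <;> simp <;> omega)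
    have := htmax (i, q) hc
    simp only at this; omega
  · apply hat; simp only [Prod.mk.injEq]; omega
  · have hc : (p, j) ∈ S := hS (p, q) (i, j) (p, j) htS haS
      (by constructor <;> simp <;> omega) (by constructor <;> simp <;> omega)
    have := htmax (p, j) hc
    simp only at this; omega

lemma step_up (S : Finset Cell) (hS : IsSkewDiagram S) (hconn : SkewConnected S)
    (t : Cell) (htS : t ∈ S)
    (a : Cell) (haS : a ∈ S) (hlt : diagVal a < diagVal t) :
    ∃ b ∈ S, CellAdj a b ∧ diagVal a < diagVal b := by
  -- there is a cell on diagonal `diagVal a + 1`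
  have hex : ∃ c ∈ S, diagVal c = diagVal a + 1 := by
    by_contra hno
    push_neg at hno
    exact hconn ⟨diagVal a + 1, hno, ⟨a, haS, by omega⟩,
      ⟨t, htS, lt_of_le_of_ne' (by omega) (hno t htS)⟩⟩
  obtain ⟨c, hcS, hcd⟩ := hex
  obtain ⟨i, j⟩ := a
  obtain ⟨i', j'⟩ := c
  simp only [diagVal] at hcd hlt ⊢
  rcases le_or_gt i i' with hii | hii
  · -- go right: (i, j+1)
    refine ⟨(i, j + 1), hS (i, j) (i', j') (i, j + 1) haS hcS
      (by constructor <;> simp <;> omega) (by constructor <;> simp <;> omega), ?_, by omega⟩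
    left; constructor <;> simp
  · -- go up: (i-1, j)
    refine ⟨(i - 1, j), hS (i', j') (i, j) (i - 1, j) hcS haS
      (by constructor <;> simp <;> omega) (by constructor <;> simp <;> omega), ?_, by omega⟩
    right; constructor <;> simp <;> omega

lemma path_aux (S : Finset Cell) (hS : IsSkewDiagram S) (hconn : SkewConnected S)
    (t : Cell) (htS : t ∈ S) (htmax : ∀ c ∈ S, diagVal c ≤ diagVal t) :
    ∀ n : ℕ, ∀ a, a ∈ S → (diagVal t - diagVal a).toNat ≤ n →
    ∃ p : List Cell, p.head? = some a ∧ p.getLast? = some t ∧ (∀ x ∈ p, x ∈ S) ∧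
      p.Chain' (fun u v => CellAdj u v ∧ diagVal u < diagVal v) := by
  intro n
  induction n with
  | zero =>
    intro a haS hn
    have : a = t := by
      by_contra hat
      have := diag_lt_of_ne S hS t htS htmax a haS hat
      omega
    subst this
    exact ⟨[a], rfl, rfl, by simp [haS], List.isChain_singleton a⟩
  | succ n ih =>
    intro a haS hn
    by_cases hat : a = t
    · subst hat
      exact ⟨[a], rfl, rfl, by simp [haS], List.isChain_singleton a⟩
    · have hlt := diag_lt_of_ne S hS t htS htmax a haS hat
      obtain ⟨b, hbS, hadj, hd⟩ := step_up S hS hconn t htS a haS hlt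
      have hble := htmax b hbS
      obtain ⟨p, hh, hl, hmem, hch⟩ := ih b hbS (by omega)
      cases p with
      | nil => simp at hh
      | cons b' q =>
        have hb' : b' = b := by simpa using hh
        rw [← hb'] at hadj hd
        refine ⟨a :: b' :: q, rfl, by simpa using hl, ?_, ?_⟩
        · intro x hx
          rcases List.mem_cons.mp hx with h | h
          · exact h ▸ haS
          · exact hmem x h
        · exact List.IsChain.cons_cons ⟨hadj, hd⟩ hch

theorem step_and_path_to_highest_box
    (S : Finset Cell) (hS : IsSkewDiagram S) (hconn : SkewConnected S)
    (t : Cell) (htS : t ∈ S) (htmax : ∀ c ∈ S, diagVal c ≤ diagVal t)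
    (a : Cell) (haS : a ∈ S) (hat : a ≠ t) :
    (∃ b ∈ S, CellAdj a b ∧ diagVal a < diagVal b) ∧
    ∃ p : List Cell, p.head? = some a ∧ p.getLast? = some t ∧ (∀ x ∈ p, x ∈ S) ∧
      p.Chain' (fun u v => CellAdj u v ∧ diagVal u < diagVal v) := by
  have hlt := diag_lt_of_ne S hS t htS htmax a haS hat
  exact ⟨step_up S hS hconn t htS a haS hlt,
    path_aux S hS hconn t htS htmax (diagVal t - diagVal a).toNat a haS le_rfl⟩
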